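/- Let X be a hereditarily paracompact Hausdorff space and Y a closed subspace of X. For every pair of open sets U₀ and U₁ in Y with U₀ ∩ U₁ = ∅, there exist open sets V₀ and V₁ in X such that Vᵢ ∩ Y = Uᵢ for i = 0,1 and cl_X(V₀) ∩ cl_X(V₁) ⊆ Y. -/

import Mathlib

/-- hereditarily paracompact Hausdorff space, closed subspace Y,
disjoint open-in-Y sets extend to open sets of X whose closures meet only inside Y. -/
theorem stmt0 {X : Type*} [TopologicalSpace X] [T2Space X]
    (hpara : ∀ A : Set X, ParacompactSpace A)
    (Y : Set X) (hY : IsClosed Y)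
    (U₀ U₁ : Set X) (hU₀Y : U₀ ⊆ Y) (hU₁Y : U₁ ⊆ Y)
    (hU₀ : IsOpen ((↑) ⁻¹' U₀ : Set Y)) (hU₁ : IsOpen ((↑) ⁻¹' U₁ : Set Y))
    (hdisj : U₀ ∩ U₁ = ∅) :
    ∃ V₀ V₁ : Set X, IsOpen V₀ ∧ IsOpen V₁ ∧
      V₀ ∩ Y = U₀ ∧ V₁ ∩ Y = U₁ ∧ closure V₀ ∩ closure V₁ ⊆ Y := by
  -- closure of U₀ in X is disjoint from U₁ (and symmetrically)
  have key : ∀ (A B : Set X), A ⊆ Y → B ⊆ Y → IsOpen ((↑) ⁻¹' B : Set Y) →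
      A ∩ B = ∅ → closure A ∩ B = ∅ := by
    intro A B hAY hBY hB hAB
    rw [Set.eq_empty_iff_forall_notMem]
    rintro x ⟨hxA, hxB⟩
    have hxY : x ∈ Y := hBY hxB
    have hx' : (⟨x, hxY⟩ : Y) ∈ closure ((↑) ⁻¹' A : Set Y) := by
      rw [closure_subtype, Subtype.image_preimage_coe, Set.inter_eq_right.2 hAY]
      exact hxA
    have h3 : ((↑) ⁻¹' B : Set Y) ∩ closure ((↑) ⁻¹' A : Set Y) = ∅ := by
      rw [← Set.subset_empty_iff]
      refine (hB.inter_closure).trans ?_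
      rw [← Set.preimage_inter, Set.inter_comm B A, hAB, Set.preimage_empty,
        closure_empty]
    exact Set.eq_empty_iff_forall_notMem.1 h3 ⟨x, hxY⟩ ⟨hxB, hx'⟩
  have hc01 : closure U₀ ∩ U₁ = ∅ := key U₀ U₁ hU₀Y hU₁Y hU₁ hdisj
  have hc10 : closure U₁ ∩ U₀ = ∅ := key U₁ U₀ hU₁Y hU₀Y hU₀ (by rw [Set.inter_comm]; exact hdisj)
  -- the open subspace G
  set G : Set X := (Y \ (U₀ ∪ U₁))ᶜ with hGdef
  have hGopen : IsOpen G := by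
    apply isOpen_compl_iff.2
    have hcl : IsClosed (((↑) ⁻¹' (U₀ ∪ U₁) : Set Y)ᶜ) := by
      rw [Set.preimage_union]
      exact (hU₀.union hU₁).isClosed_compl
    obtain ⟨C, hC, hCeq⟩ := (isClosed_induced_iff.1 hcl)
    have himg : Y \ (U₀ ∪ U₁) = Y ∩ C := by
      ext x
      constructor
      · rintro ⟨hxY, hx⟩
        exact ⟨hxY, (Set.ext_iff.1 hCeq ⟨x, hxY⟩).2 hx⟩
      · rintro ⟨hxY, hxC⟩
        exact ⟨hxY, (Set.ext_iff.1 hCeq ⟨x, hxY⟩).1 hxC⟩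
    rw [himg]
    exact hY.inter hC
  have hU₀G : U₀ ⊆ G := fun x hx hmem => hmem.2 (Or.inl hx)
  have hU₁G : U₁ ⊆ G := fun x hx hmem => hmem.2 (Or.inr hx)
  have hGY : G ∩ Y ⊆ U₀ ∪ U₁ := by
    rintro x ⟨hxG, hxY⟩
    by_contra h
    exact hxG ⟨hxY, h⟩
  -- G is a normal subspace
  haveI : ParacompactSpace G := hpara G
  haveI : NormalSpace G := NormalSpace.of_paracompactSpace_r1Space (X := G)
  -- preimages of U₀, U₁ are closed in G and disjoint
  have hclosedG : ∀ (A B : Set X), A ⊆ Y → closure A ∩ B = ∅ →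
      G ∩ Y ⊆ A ∪ B → IsClosed ((↑) ⁻¹' A : Set G) := by
    intro A B hAY hclAB hGAB
    rw [isClosed_induced_iff]
    refine ⟨closure A, isClosed_closure, ?_⟩
    ext ⟨x, hxG⟩
    simp only [Set.mem_preimage]
    constructor
    · intro hx
      have hxY : x ∈ Y := (hY.closure_subset_iff.2 hAY) hx
      rcases hGAB ⟨hxG, hxY⟩ with h | h
      · exact h
      · exact absurd ⟨hx, h⟩ (Set.eq_empty_iff_forall_notMem.1 hclAB x)
    · exact fun h => subset_closure h
  have hAcl : IsClosed ((↑) ⁻¹' U₀ : Set G) := hclosedG U₀ U₁ hU₀Y hc01 hGY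
  have hBcl : IsClosed ((↑) ⁻¹' U₁ : Set G) :=
    hclosedG U₁ U₀ hU₁Y hc10 (fun x hx => (hGY hx).symm)
  have hABdisj : Disjoint ((↑) ⁻¹' U₀ : Set G) ((↑) ⁻¹' U₁ : Set G) := by
    rw [Set.disjoint_iff_inter_eq_empty, ← Set.preimage_inter, hdisj, Set.preimage_empty]
  -- use normality twice to get open sets with disjoint closures
  obtain ⟨v₀, hv₀open, hv₀sub, hv₀cl⟩ :=
    normal_exists_closure_subset hAcl hBcl.isOpen_compl
      (fun x hx hx1 => Set.disjoint_left.1 hABdisj hx hx1)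
  obtain ⟨v₁, hv₁open, hv₁sub, hv₁cl⟩ :=
    normal_exists_closure_subset hBcl isClosed_closure.isOpen_compl
      (fun x hx => fun hc => hv₀cl hc hx)
  have hclv : closure v₀ ∩ closure v₁ = ∅ := by
    rw [Set.eq_empty_iff_forall_notMem]
    rintro x ⟨h0, h1⟩
    exact hv₁cl h1 h0
  -- push forward to X
  refine ⟨(↑) '' v₀, (↑) '' v₁, hGopen.isOpenMap_subtype_val _ hv₀open,
    hGopen.isOpenMap_subtype_val _ hv₁open, ?_, ?_, ?_⟩
  · apply Set.Subset.antisymm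
    · rintro x ⟨⟨⟨x', hx'G⟩, hx'v, rfl⟩, hxY⟩
      rcases hGY ⟨hx'G, hxY⟩ with h | h
      · exact h
      · exact absurd h (hv₀cl (subset_closure hx'v))
    · intro x hx
      exact ⟨⟨⟨x, hU₀G hx⟩, hv₀sub hx, rfl⟩, hU₀Y hx⟩
  · apply Set.Subset.antisymm
    · rintro x ⟨⟨⟨x', hx'G⟩, hx'v, rfl⟩, hxY⟩
      rcases hGY ⟨hx'G, hxY⟩ with h | h
      · exact absurd (subset_closure (hv₀sub h)) (hv₁cl (subset_closure hx'v))
      · exact h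
    · intro x hx
      exact ⟨⟨⟨x, hU₁G hx⟩, hv₁sub hx, rfl⟩, hU₁Y hx⟩
  · rintro x ⟨h0, h1⟩
    by_contra hxY
    have hxG : x ∈ G := fun hmem => hxY hmem.1
    have h0' : (⟨x, hxG⟩ : G) ∈ closure v₀ := by rw [closure_subtype]; exact h0
    have h1' : (⟨x, hxG⟩ : G) ∈ closure v₁ := by rw [closure_subtype]; exact h1
    exact Set.eq_empty_iff_forall_notMem.1 hclv ⟨x, hxG⟩ ⟨h0', h1'⟩
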